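/- Let h > 0 and T(x) = x - h·x³. The pushforward of the standard Gaussian measure γ under T is absolutely continuous with respect to Lebesgue measure, and Measure.map T γ = volume.withDensity p₁, where p₁(y) = Σ_{x ∈ T⁻¹({y})} φ(x)/|1 - 3h·x²| (a finite sum over the preimage set, which has at most three elements; the formula is understood Lebesgue-almost everywhere in y). -/

import Mathlib

open MeasureTheory ProbabilityTheory
open scoped ENNReal NNReal

namespace ForwardEulerAux

noncomputable def Tmap (h : ℝ) : ℝ → ℝ := fun x => x - h * x ^ 3

noncomputable def Ffun (h : ℝ) (x : ℝ) : ℝ :=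
  (Real.sqrt (2 * Real.pi))⁻¹ * Real.exp (-x ^ 2 / 2) / |1 - 3 * h * x ^ 2|

noncomputable def gphi (x : ℝ) : ℝ :=
  (Real.sqrt (2 * Real.pi))⁻¹ * Real.exp (-x ^ 2 / 2)

noncomputable def Psi (h : ℝ) (s : Set ℝ) : ℝ → ℝ≥0∞ :=
  Function.extend (s.restrict (Tmap h))
    (fun x => ENNReal.ofReal (Ffun h (x : ℝ))) (fun _ => 0)

lemma Ffun_nonneg (h x : ℝ) : 0 ≤ Ffun h x := by
  unfold Ffun
  positivity

lemma gphi_pos (x : ℝ) : 0 < gphi x := by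
  unfold gphi
  positivity

lemma hasDerivAt_Tmap (h x : ℝ) : HasDerivAt (Tmap h) (1 - 3 * h * x ^ 2) x := by
  have h1 : HasDerivAt (fun x : ℝ => x - h * x ^ 3) (1 - h * (3 * x ^ 2)) x := by
    have := (hasDerivAt_id' x).fun_sub ((hasDerivAt_pow 3 x).const_mul h)
    exact this.congr_deriv (by norm_num)
  convert h1 using 1
  · rfl
  · ring

lemma measurable_Tmap (h : ℝ) : Measurable (Tmap h) := by
  have : Continuous (Tmap h) := by
    unfold Tmap; continuity
  exact this.measurable

lemma measurable_Ffun (h : ℝ) : Measurable (Ffun h) := by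
  unfold Ffun
  apply Measurable.div
  · exact (continuous_const.mul (Real.continuous_exp.comp (by continuity))).measurable
  · exact (continuous_abs.comp (by continuity)).measurable

section Branch

variable {h : ℝ} {s : Set ℝ}

lemma hasFDeriv (hs : MeasurableSet s) :
    ∀ x ∈ s, HasFDerivWithinAt (Tmap h)
      ((1 : ℝ →L[ℝ] ℝ).smulRight (1 - 3 * h * x ^ 2)) s x := fun x _ =>
  ((hasDerivAt_Tmap h x).hasDerivWithinAt).hasFDerivWithinAt

lemma psi_measurable (hs : MeasurableSet s) (hinj : Set.InjOn (Tmap h) s) :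
    Measurable (Psi h s) := by
  have hemb : MeasurableEmbedding (s.restrict (Tmap h)) :=
    measurableEmbedding_of_fderivWithin hs (hasFDeriv hs) hinj
  exact hemb.measurable_extend
    (ENNReal.measurable_ofReal.comp ((measurable_Ffun h).comp measurable_subtype_coe))
    measurable_const

lemma psi_apply_mem (hinj : Set.InjOn (Tmap h) s) {x : ℝ} (hx : x ∈ s) :
    Psi h s (Tmap h x) = ENNReal.ofReal (Ffun h x) := by
  have hinj' : Function.Injective (s.restrict (Tmap h)) :=
    Set.injOn_iff_injective.mp hinj
  have : Tmap h x = s.restrict (Tmap h) ⟨x, hx⟩ := rfl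
  rw [this]
  exact hinj'.extend_apply _ _ _

lemma psi_apply_not_mem {y : ℝ} (hy : y ∉ Tmap h '' s) : Psi h s y = 0 := by
  apply Function.extend_apply'
  rintro ⟨⟨x, hx⟩, rfl⟩
  exact hy ⟨x, hx, rfl⟩

lemma psi_tsum (hinj : Set.InjOn (Tmap h) s) (y : ℝ) :
    Psi h s y = ENNReal.ofReal (∑' x : ↥(Tmap h ⁻¹' {y} ∩ s), Ffun h (x : ℝ)) := by
  by_cases hy : ∃ x ∈ s, Tmap h x = y
  · obtain ⟨x₀, hx₀, rfl⟩ := hy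
    have hset : Tmap h ⁻¹' {Tmap h x₀} ∩ s = {x₀} := by
      ext z
      constructor
      · rintro ⟨hz1, hz2⟩
        exact hinj hz2 hx₀ hz1
      · rintro rfl
        exact ⟨rfl, hx₀⟩
    rw [hset, tsum_singleton, psi_apply_mem hinj hx₀]
  · have hset : Tmap h ⁻¹' {y} ∩ s = (∅ : Set ℝ) := by
      ext z
      simp only [Set.mem_inter_iff, Set.mem_preimage, Set.mem_singleton_iff,
        Set.mem_empty_iff_false, iff_false, not_and]
      intro hz1 hz2
      exact hy ⟨z, hz2, hz1⟩
    rw [hset]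
    rw [psi_apply_not_mem (by rintro ⟨x, hx, rfl⟩; exact hy ⟨x, hx, rfl⟩)]
    simp [tsum_empty]

lemma psi_lintegral (hs : MeasurableSet s) (hinj : Set.InjOn (Tmap h) s)
    (hD : ∀ x ∈ s, 1 - 3 * h * x ^ 2 ≠ 0) {A : Set ℝ} (hA : MeasurableSet A) :
    ∫⁻ y in A, Psi h s y = ∫⁻ x in s ∩ Tmap h ⁻¹' A, ENNReal.ofReal (gphi x) := by
  have himg : MeasurableSet (Tmap h '' s) :=
    hs.image_of_continuousOn_injOn
      (fun x hx => ((hasDerivAt_Tmap h x).continuousAt).continuousWithinAt) hinj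
  -- supported on the image
  have hsupp : Psi h s = (Tmap h '' s).indicator (Psi h s) := by
    funext y
    by_cases hy : y ∈ Tmap h '' s
    · rw [Set.indicator_of_mem hy]
    · rw [Set.indicator_of_notMem hy, psi_apply_not_mem hy]
  calc ∫⁻ y in A, Psi h s y
      = ∫⁻ y in A, (Tmap h '' s).indicator (Psi h s) y := by rw [← hsupp]
    _ = ∫⁻ y in Tmap h '' s ∩ A, Psi h s y := by
        rw [lintegral_indicator himg, Measure.restrict_restrict himg]
    _ = ∫⁻ y in Tmap h '' s, A.indicator (Psi h s) y := by
        rw [lintegral_indicator hA, Measure.restrict_restrict hA, Set.inter_comm]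
    _ = ∫⁻ x in s, ENNReal.ofReal
          |((1 : ℝ →L[ℝ] ℝ).smulRight (1 - 3 * h * x ^ 2)).det| *
          A.indicator (Psi h s) (Tmap h x) :=
        lintegral_image_eq_lintegral_abs_det_fderiv_mul volume hs (hasFDeriv hs) hinj _
    _ = ∫⁻ x in s, (Tmap h ⁻¹' A).indicator (fun x => ENNReal.ofReal (gphi x)) x := by
        apply setLIntegral_congr_fun hs
        intro x hx
        beta_reduce
        rw [ContinuousLinearMap.smulRight_one_eq_toSpanSingleton,
          ContinuousLinearMap.det_toSpanSingleton]
        by_cases hTx : Tmap h x ∈ A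
        · rw [Set.indicator_of_mem hTx, Set.indicator_of_mem (by exact hTx),
            psi_apply_mem hinj hx, ← ENNReal.ofReal_mul (abs_nonneg _)]
          congr 1
          unfold Ffun gphi
          rw [mul_comm, div_mul_cancel₀]
          exact abs_ne_zero.mpr (hD x hx)
        · rw [Set.indicator_of_notMem hTx, Set.indicator_of_notMem (by exact hTx),
            mul_zero]
    _ = ∫⁻ x in s ∩ Tmap h ⁻¹' A, ENNReal.ofReal (gphi x) := by
        rw [lintegral_indicator (measurable_Tmap h hA),
          Measure.restrict_restrict (measurable_Tmap h hA), Set.inter_comm]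

end Branch

lemma preimage_finite {h : ℝ} (hh : 0 < h) (y : ℝ) :
    (Tmap h ⁻¹' {y}).Finite := by
  have hP : (Polynomial.X - Polynomial.C h * Polynomial.X ^ 3 - Polynomial.C y
      : Polynomial ℝ) ≠ 0 := by
    intro hP0
    have := congrArg (fun p => Polynomial.coeff p 3) hP0
    simp [Polynomial.coeff_X, Polynomial.coeff_C] at this
    exact hh.ne' this
  have := Polynomial.finite_setOf_isRoot hP
  apply this.subset
  intro x hx
  simp only [Set.mem_preimage, Set.mem_singleton_iff, Tmap] at hx
  simp [Polynomial.IsRoot, Set.mem_setOf_eq, hx, sub_eq_zero]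

end ForwardEulerAux

open ForwardEulerAux

/-- For `h > 0` and `T x = x - h * x ^ 3`, the pushforward of the
standard Gaussian `γ` under `T` is absolutely continuous with respect to Lebesgue
measure, with density `p₁ y = ∑_{x ∈ T⁻¹{y}} φ x / |1 - 3 h x²|`, where
`φ` is the standard Gaussian density (the sum over the preimage set is finite,
and the formula holds Lebesgue-a.e. in `y`, which is all that the
`withDensity` equality requires). -/
theorem forwardEuler_pushforward_gaussian_density
    (h : ℝ) (hh : 0 < h) :
    Measure.map (fun x : ℝ => x - h * x ^ 3) (gaussianReal 0 1) ≪ volume ∧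
    Measure.map (fun x : ℝ => x - h * x ^ 3) (gaussianReal 0 1) =
      volume.withDensity (fun y => ENNReal.ofReal
        (∑' x : ((fun x : ℝ => x - h * x ^ 3) ⁻¹' {y}),
          (Real.sqrt (2 * Real.pi))⁻¹ * Real.exp (-(x : ℝ) ^ 2 / 2) /
            |1 - 3 * h * (x : ℝ) ^ 2|)) := by
  classical
  have key : Measure.map (Tmap h) (gaussianReal 0 1) =
      volume.withDensity (fun y => ENNReal.ofReal
        (∑' x : ↥(Tmap h ⁻¹' {y}), Ffun h (x : ℝ))) := by
    -- setup
    set a : ℝ := Real.sqrt ((3 * h)⁻¹) with ha_def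
    have h3h : (0 : ℝ) < 3 * h := by linarith
    have ha0 : 0 < a := Real.sqrt_pos.mpr (by positivity)
    have hasq : a ^ 2 = (3 * h)⁻¹ := Real.sq_sqrt (by positivity)
    have hDa : 1 - 3 * h * a ^ 2 = 0 := by
      rw [hasq]; field_simp; ring
    have hDna : 1 - 3 * h * (-a) ^ 2 = 0 := by
      rw [neg_pow]; simpa using hDa
    -- sign of derivative
    have hDpos : ∀ x ∈ Set.Ioo (-a) a, 0 < 1 - 3 * h * x ^ 2 := by
      rintro x ⟨hx1, hx2⟩
      have hxa : x ^ 2 < a ^ 2 := sq_lt_sq' (by linarith) hx2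
      nlinarith [hasq, hxa]
    have hDneg : ∀ x : ℝ, a < |x| → 1 - 3 * h * x ^ 2 < 0 := by
      intro x hx
      have hxa : a ^ 2 < x ^ 2 := by nlinarith [sq_abs x, abs_nonneg x]
      nlinarith [hasq, hxa]
    -- the three branches
    set s₁ : Set ℝ := Set.Iio (-a) with hs₁
    set s₂ : Set ℝ := Set.Ioo (-a) a with hs₂
    set s₃ : Set ℝ := Set.Ioi a with hs₃
    have hms₁ : MeasurableSet s₁ := measurableSet_Iio
    have hms₂ : MeasurableSet s₂ := measurableSet_Ioo
    have hms₃ : MeasurableSet s₃ := measurableSet_Ioi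
    have hderiv : ∀ x : ℝ, deriv (Tmap h) x = 1 - 3 * h * x ^ 2 :=
      fun x => (hasDerivAt_Tmap h x).deriv
    have hcont : Continuous (Tmap h) := by unfold Tmap; continuity
    have hD₁ : ∀ x ∈ s₁, 1 - 3 * h * x ^ 2 ≠ 0 := by
      intro x hx
      refine (hDneg x ?_).ne
      rw [abs_of_neg (by simp only [hs₁, Set.mem_Iio] at hx; linarith)]
      simp only [hs₁, Set.mem_Iio] at hx; linarith
    have hD₂ : ∀ x ∈ s₂, 1 - 3 * h * x ^ 2 ≠ 0 := fun x hx => (hDpos x hx).ne'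
    have hD₃ : ∀ x ∈ s₃, 1 - 3 * h * x ^ 2 ≠ 0 := by
      intro x hx
      refine (hDneg x ?_).ne
      simp only [hs₃, Set.mem_Ioi] at hx
      rw [abs_of_pos (lt_trans ha0 hx)]; exact hx
    have hinj₁ : Set.InjOn (Tmap h) s₁ := by
      refine (strictAntiOn_of_deriv_neg (convex_Iio _) (hcont.continuousOn) ?_).injOn
      intro x hx
      rw [interior_Iio] at hx
      rw [hderiv x]
      apply hDneg
      simp only [Set.mem_Iio] at hx
      rw [abs_of_neg (by linarith)]
      linarith
    have hinj₂ : Set.InjOn (Tmap h) s₂ := by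
      refine (strictMonoOn_of_deriv_pos (convex_Ioo _ _) (hcont.continuousOn) ?_).injOn
      intro x hx
      rw [interior_Ioo] at hx
      rw [hderiv x]
      exact hDpos x hx
    have hinj₃ : Set.InjOn (Tmap h) s₃ := by
      refine (strictAntiOn_of_deriv_neg (convex_Ioi _) (hcont.continuousOn) ?_).injOn
      intro x hx
      rw [interior_Ioi] at hx
      rw [hderiv x]
      exact hDneg x (by rw [abs_of_pos (lt_trans ha0 hx)]; exact hx)
    -- pointwise decomposition of the density
    have hFa : Ffun h a = 0 := by unfold Ffun; rw [hDa]; simp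
    have hFna : Ffun h (-a) = 0 := by unfold Ffun; rw [hDna]; simp
    have htrich : ∀ x : ℝ, x ∈ s₁ ∨ x ∈ s₂ ∨ x ∈ s₃ ∨ x = -a ∨ x = a := by
      intro x
      rcases lt_trichotomy x (-a) with h1 | h1 | h1
      · exact Or.inl h1
      · exact Or.inr (Or.inr (Or.inr (Or.inl h1)))
      · rcases lt_trichotomy x a with h2 | h2 | h2
        · exact Or.inr (Or.inl ⟨h1, h2⟩)
        · exact Or.inr (Or.inr (Or.inr (Or.inr h2)))
        · exact Or.inr (Or.inr (Or.inl h2))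
    have hdisj12 : ∀ x : ℝ, x ∈ s₁ → x ∈ s₂ → False := by
      rintro x hx1 ⟨hx2, _⟩
      simp only [hs₁, Set.mem_Iio] at hx1; linarith
    have hdisj13 : ∀ x : ℝ, x ∈ s₁ → x ∈ s₃ → False := by
      intro x hx1 hx3
      simp only [hs₁, Set.mem_Iio] at hx1
      simp only [hs₃, Set.mem_Ioi] at hx3
      linarith
    have hdisj23 : ∀ x : ℝ, x ∈ s₂ → x ∈ s₃ → False := by
      rintro x ⟨_, hx2⟩ hx3
      simp only [hs₃, Set.mem_Ioi] at hx3; linarith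
    have hnotmem : ∀ x : ℝ, (x = -a ∨ x = a) → x ∉ s₁ ∧ x ∉ s₂ ∧ x ∉ s₃ := by
      rintro x (rfl | rfl)
      · refine ⟨by simp [hs₁], by simp [hs₂], ?_⟩
        simp only [hs₃, Set.mem_Ioi, not_lt]; linarith
      · refine ⟨?_, by simp [hs₂], by simp [hs₃]⟩
        simp only [hs₁, Set.mem_Iio, not_lt]; linarith
    have hpt : ∀ y : ℝ, ENNReal.ofReal (∑' x : ↥(Tmap h ⁻¹' {y}), Ffun h (x : ℝ)) =
        Psi h s₁ y + Psi h s₂ y + Psi h s₃ y := by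
      intro y
      set S := Tmap h ⁻¹' {y} with hS_def
      have hSfin : S.Finite := preimage_finite hh y
      -- summability of the pieces
      have hsummable : ∀ t : Set ℝ, t ⊆ S → Summable (t.indicator (Ffun h)) := by
        intro t ht
        apply summable_of_ne_finset_zero (s := hSfin.toFinset)
        intro b hb
        apply Set.indicator_of_notMem
        intro hbt
        exact hb (hSfin.mem_toFinset.mpr (ht hbt))
      have hind : S.indicator (Ffun h) =
          (S ∩ s₁).indicator (Ffun h) + (S ∩ s₂).indicator (Ffun h) +
          (S ∩ s₃).indicator (Ffun h) := by
        funext x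
        simp only [Pi.add_apply]
        by_cases hxS : x ∈ S
        · rcases htrich x with hx | hx | hx | hx | hx
          · have m1 : x ∈ S ∩ s₁ := ⟨hxS, hx⟩
            have n2 : x ∉ S ∩ s₂ := fun hc => hdisj12 x hx hc.2
            have n3 : x ∉ S ∩ s₃ := fun hc => hdisj13 x hx hc.2
            rw [Set.indicator_of_mem hxS, Set.indicator_of_mem m1,
              Set.indicator_of_notMem n2, Set.indicator_of_notMem n3]
            ring
          · have m2 : x ∈ S ∩ s₂ := ⟨hxS, hx⟩
            have n1 : x ∉ S ∩ s₁ := fun hc => hdisj12 x hc.2 hx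
            have n3 : x ∉ S ∩ s₃ := fun hc => hdisj23 x hx hc.2
            rw [Set.indicator_of_mem hxS, Set.indicator_of_mem m2,
              Set.indicator_of_notMem n1, Set.indicator_of_notMem n3]
            ring
          · have m3 : x ∈ S ∩ s₃ := ⟨hxS, hx⟩
            have n1 : x ∉ S ∩ s₁ := fun hc => hdisj13 x hc.2 hx
            have n2 : x ∉ S ∩ s₂ := fun hc => hdisj23 x hc.2 hx
            rw [Set.indicator_of_mem hxS, Set.indicator_of_mem m3,
              Set.indicator_of_notMem n1, Set.indicator_of_notMem n2]
            ring
          · have hmem := hnotmem x (Or.inl hx)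
            have n1 : x ∉ S ∩ s₁ := fun hc => hmem.1 hc.2
            have n2 : x ∉ S ∩ s₂ := fun hc => hmem.2.1 hc.2
            have n3 : x ∉ S ∩ s₃ := fun hc => hmem.2.2 hc.2
            rw [Set.indicator_of_mem hxS, Set.indicator_of_notMem n1,
              Set.indicator_of_notMem n2, Set.indicator_of_notMem n3, hx, hFna]
            ring
          · have hmem := hnotmem x (Or.inr hx)
            have n1 : x ∉ S ∩ s₁ := fun hc => hmem.1 hc.2
            have n2 : x ∉ S ∩ s₂ := fun hc => hmem.2.1 hc.2
            have n3 : x ∉ S ∩ s₃ := fun hc => hmem.2.2 hc.2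
            rw [Set.indicator_of_mem hxS, Set.indicator_of_notMem n1,
              Set.indicator_of_notMem n2, Set.indicator_of_notMem n3, hx, hFa]
            ring
        · have n1 : x ∉ S ∩ s₁ := fun hc => hxS hc.1
          have n2 : x ∉ S ∩ s₂ := fun hc => hxS hc.1
          have n3 : x ∉ S ∩ s₃ := fun hc => hxS hc.1
          rw [Set.indicator_of_notMem hxS, Set.indicator_of_notMem n1,
            Set.indicator_of_notMem n2, Set.indicator_of_notMem n3]
          ring
      have hsm1 : Summable ((S ∩ s₁).indicator (Ffun h)) :=
        hsummable _ Set.inter_subset_left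
      have hsm2 : Summable ((S ∩ s₂).indicator (Ffun h)) :=
        hsummable _ Set.inter_subset_left
      have hsm3 : Summable ((S ∩ s₃).indicator (Ffun h)) :=
        hsummable _ Set.inter_subset_left
      have hsum_split : (∑' x : ↥S, Ffun h (x : ℝ)) =
          (∑' x : ↥(S ∩ s₁), Ffun h (x : ℝ)) + (∑' x : ↥(S ∩ s₂), Ffun h (x : ℝ)) +
          (∑' x : ↥(S ∩ s₃), Ffun h (x : ℝ)) := by
        rw [tsum_subtype, tsum_subtype (S ∩ s₁), tsum_subtype (S ∩ s₂),
          tsum_subtype (S ∩ s₃), hind]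
        have hfun : (fun x => ((S ∩ s₁).indicator (Ffun h) + (S ∩ s₂).indicator (Ffun h) +
            (S ∩ s₃).indicator (Ffun h)) x) = fun x => (S ∩ s₁).indicator (Ffun h) x +
            ((S ∩ s₂).indicator (Ffun h) x + (S ∩ s₃).indicator (Ffun h) x) := by
          funext x
          simp only [Pi.add_apply]
          ring
        rw [show (∑' x, ((S ∩ s₁).indicator (Ffun h) + (S ∩ s₂).indicator (Ffun h) +
            (S ∩ s₃).indicator (Ffun h)) x) = ∑' x, ((S ∩ s₁).indicator (Ffun h) x +
            ((S ∩ s₂).indicator (Ffun h) x + (S ∩ s₃).indicator (Ffun h) x)) from by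
          rw [hfun]]
        rw [Summable.tsum_add hsm1 (hsm2.add hsm3), Summable.tsum_add hsm2 hsm3]
        ring
      have htsum_nonneg : ∀ t : Set ℝ, 0 ≤ ∑' x : ↥t, Ffun h (x : ℝ) :=
        fun t => tsum_nonneg (fun x => Ffun_nonneg h _)
      rw [hsum_split, ENNReal.ofReal_add
          (add_nonneg (htsum_nonneg (S ∩ s₁)) (htsum_nonneg (S ∩ s₂)))
          (htsum_nonneg (S ∩ s₃)),
        ENNReal.ofReal_add (htsum_nonneg (S ∩ s₁)) (htsum_nonneg (S ∩ s₂)),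
        psi_tsum hinj₁, psi_tsum hinj₂, psi_tsum hinj₃]
    -- gaussian density
    have hgauss : gaussianReal 0 1 = volume.withDensity (gaussianPDF 0 1) :=
      gaussianReal_of_var_ne_zero 0 one_ne_zero
    have hpdf : ∀ x : ℝ, gaussianPDF 0 1 x = ENNReal.ofReal (gphi x) := by
      intro x
      unfold gaussianPDF gaussianPDFReal gphi
      norm_num
    -- measure extensionality
    ext A hA
    rw [Measure.map_apply (measurable_Tmap h) hA, hgauss,
      withDensity_apply _ (measurable_Tmap h hA), withDensity_apply _ hA]
    have hlhs : ∫⁻ x in Tmap h ⁻¹' A, gaussianPDF 0 1 x =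
        ∫⁻ x in Tmap h ⁻¹' A, ENNReal.ofReal (gphi x) := by
      apply lintegral_congr
      exact fun x => hpdf x
    rw [hlhs]
    set B := Tmap h ⁻¹' A with hB_def
    have hmB : MeasurableSet B := measurable_Tmap h hA
    -- decompose LHS over the three branches
    have hnull : volume ({-a, a} : Set ℝ) = 0 :=
      ((Set.finite_singleton a).insert (-a)).measure_zero _
    have hd1 : Disjoint (B ∩ s₁) (B ∩ s₂ ∪ B ∩ s₃) := by
      rw [Set.disjoint_left]
      rintro x ⟨_, hx1⟩ hc
      rcases hc with ⟨_, hx2⟩ | ⟨_, hx3⟩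
      · exact hdisj12 x hx1 hx2
      · exact hdisj13 x hx1 hx3
    have hd2 : Disjoint (B ∩ s₂) (B ∩ s₃) := by
      rw [Set.disjoint_left]
      rintro x ⟨_, hx2⟩ ⟨_, hx3⟩
      exact hdisj23 x hx2 hx3
    have hae : B =ᵐ[volume] ((B ∩ s₁ ∪ (B ∩ s₂ ∪ B ∩ s₃)) : Set ℝ) := by
      rw [MeasureTheory.ae_eq_set]
      constructor
      · refine measure_mono_null (fun x hx => ?_) hnull
        simp only [Set.mem_diff, Set.mem_union, Set.mem_inter_iff, not_or] at hx
        obtain ⟨hxB, hx1, hx2, hx3⟩ := hx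
        rcases htrich x with hc | hc | hc | hc | hc
        · exact absurd ⟨hxB, hc⟩ hx1
        · exact absurd ⟨hxB, hc⟩ hx2
        · exact absurd ⟨hxB, hc⟩ hx3
        · simp [hc]
        · simp [hc]
      · refine measure_mono_null (fun x hx => ?_) (measure_empty (μ := volume))
        simp only [Set.mem_diff, Set.mem_union, Set.mem_inter_iff] at hx
        obtain ⟨hc, hxB⟩ := hx
        rcases hc with hc | hc | hc <;> exact absurd hc.1 hxB
    have hBsplit : ∫⁻ x in B, ENNReal.ofReal (gphi x) =
        (∫⁻ x in B ∩ s₁, ENNReal.ofReal (gphi x)) +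
        (∫⁻ x in B ∩ s₂, ENNReal.ofReal (gphi x)) +
        (∫⁻ x in B ∩ s₃, ENNReal.ofReal (gphi x)) := by
      rw [setLIntegral_congr hae,
        lintegral_union ((hmB.inter hms₂).union (hmB.inter hms₃)) hd1,
        lintegral_union (hmB.inter hms₃) hd2]
      ring
    rw [hBsplit]
    -- RHS: decompose the density pointwise and integrate each branch
    have hrhs : ∫⁻ y in A, ENNReal.ofReal (∑' x : ↥(Tmap h ⁻¹' {y}), Ffun h (x : ℝ)) =
        (∫⁻ y in A, Psi h s₁ y) + (∫⁻ y in A, Psi h s₂ y) + (∫⁻ y in A, Psi h s₃ y) := by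
      have : ∀ y : ℝ, ENNReal.ofReal (∑' x : ↥(Tmap h ⁻¹' {y}), Ffun h (x : ℝ)) =
          Psi h s₁ y + Psi h s₂ y + Psi h s₃ y := hpt
      rw [lintegral_congr this]
      rw [lintegral_add_left (f := fun y => Psi h s₁ y + Psi h s₂ y) ((psi_measurable hms₁ hinj₁).add
        (psi_measurable hms₂ hinj₂)),
        lintegral_add_left (psi_measurable hms₁ hinj₁)]
    rw [hrhs, psi_lintegral hms₁ hinj₁ hD₁ hA, psi_lintegral hms₂ hinj₂ hD₂ hA,
      psi_lintegral hms₃ hinj₃ hD₃ hA, Set.inter_comm s₁ B, Set.inter_comm s₂ B,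
      Set.inter_comm s₃ B]
  constructor
  · rw [show (fun x : ℝ => x - h * x ^ 3) = Tmap h from rfl, key]
    exact withDensity_absolutelyContinuous _ _
  · exact key
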